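/- For the estimator of the previous theorem with $m=1$, $K_1=d\geq 2$, and $\Sigma = \beta\mathbf{1}\mathbf{1}^\top + (1-\beta)I$ for $\beta\in[0,1]$, the expected value of the estimator equals $\frac{1}{2}\cdot\frac{\log(\beta d^2 + (1-\beta)d)}{\log d}$, and as $\beta$ ranges over $[0,1]$ this expression ranges over the entire interval $[\frac{1}{2}, 1]$. In particular, the tail-index test can output any value of $1/\alpha$ in $[1/2,1]$ (i.e., $\alpha\in[1,2]$) on jointly Gaussian data. -/

import Mathlib

open MeasureTheory ProbabilityTheory
open Real Set

lemma abs_log_le (x : ℝ) : abs (Real.log |x|) ≤ 2 * |x| ^ (-(1:ℝ)/2) + |x| := by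
  rcases eq_or_ne x 0 with rfl | hx
  · simp
  · set t := |x| with ht
    have ht0 : 0 < t := abs_pos.mpr hx
    rcases le_or_gt 1 t with h1 | h1
    · have : Real.log t ≤ t - 1 := Real.log_le_sub_one_of_pos ht0
      have hnn : 0 ≤ Real.log t := Real.log_nonneg h1
      have : |Real.log t| ≤ t := by rw [abs_of_nonneg hnn]; linarith
      have hpos : 0 ≤ 2 * t ^ (-(1:ℝ)/2) := by positivity
      linarith
    · have hu : 0 < t ^ (-(1:ℝ)/2) := Real.rpow_pos_of_pos ht0 _
      have hlogu : Real.log (t ^ (-(1:ℝ)/2)) = (-(1:ℝ)/2) * Real.log t :=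
        Real.log_rpow ht0 _
      have h2 : Real.log (t ^ (-(1:ℝ)/2)) ≤ t ^ (-(1:ℝ)/2) - 1 :=
        Real.log_le_sub_one_of_pos hu
      have hneg : Real.log t ≤ 0 := Real.log_nonpos ht0.le h1.le
      have : |Real.log t| = -Real.log t := abs_of_nonpos hneg
      rw [this]
      nlinarith [ht0.le]

lemma integrable_abs_rpow_mul_exp_neg_mul_sq {b s : ℝ} (hb : 0 < b) (hs : -1 < s) :
    Integrable fun x : ℝ => |x| ^ s * Real.exp (-b * x ^ 2) := by
  rw [← integrableOn_univ, ← @Iio_union_Ici _ _ (0 : ℝ), integrableOn_union,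
    integrableOn_Ici_iff_integrableOn_Ioi]
  have hIoi : IntegrableOn (fun x : ℝ => |x| ^ s * Real.exp (-b * x ^ 2)) (Ioi 0) := by
    refine (integrableOn_rpow_mul_exp_neg_mul_sq hb hs).congr_fun ?_ measurableSet_Ioi
    intro x hx
    simp [abs_of_pos (show (0:ℝ) < x from hx)]
  refine ⟨?_, hIoi⟩
  rw [← (Measure.measurePreserving_neg (volume : Measure ℝ)).integrableOn_comp_preimage
      (Homeomorph.neg ℝ).measurableEmbedding]
  simp only [Function.comp_def, neg_sq, neg_preimage, neg_Iio, neg_neg, neg_zero, abs_neg]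
  exact hIoi

lemma integrable_log_abs_gaussian : Integrable (fun x => Real.log |x|) (gaussianReal 0 1) := by
  rw [gaussianReal_of_var_ne_zero _ one_ne_zero,
    integrable_withDensity_iff (measurable_gaussianPDF _ _)
      (Filter.Eventually.of_forall fun x => ENNReal.ofReal_lt_top)]
  have heq : ∀ x : ℝ, Real.log |x| * (gaussianPDF 0 1 x).toReal
      = Real.log |x| * gaussianPDFReal 0 1 x := by
    intro x
    rw [gaussianPDF, ENNReal.toReal_ofReal (gaussianPDFReal_nonneg _ _ _)]
  simp only [heq]
  have hG : Integrable (fun x : ℝ =>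
      (Real.sqrt (2 * Real.pi))⁻¹ * ((2 * |x| ^ (-(1:ℝ)/2) + |x|) * Real.exp (-(1/2) * x ^ 2))) := by
    refine Integrable.const_mul ?_ _
    have h1 := (integrable_abs_rpow_mul_exp_neg_mul_sq (by norm_num : (0:ℝ) < 1/2)
      (by norm_num : (-1:ℝ) < -(1:ℝ)/2)).const_mul 2
    have h2 := integrable_abs_rpow_mul_exp_neg_mul_sq (by norm_num : (0:ℝ) < 1/2)
      (by norm_num : (-1:ℝ) < 1)
    simp only [Real.rpow_one] at h2
    have := h1.add h2
    refine this.congr ?_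
    refine Filter.Eventually.of_forall fun x => ?_
    simp only [Pi.add_apply]
    ring
  refine hG.mono' ?_ ?_
  · exact ((Real.measurable_log.comp measurable_abs).mul
      (measurable_gaussianPDFReal 0 1)).aestronglyMeasurable
  · refine Filter.Eventually.of_forall fun x => ?_
    have hpdf : gaussianPDFReal 0 1 x = (Real.sqrt (2 * Real.pi))⁻¹ * Real.exp (-(1/2) * x ^ 2) := by
      simp only [gaussianPDFReal, NNReal.coe_one, mul_one, sub_zero]
      rw [show -x^2/2 = -(1/2)*x^2 by ring]
    rw [Real.norm_eq_abs, abs_mul, hpdf]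
    have h1 : abs (Real.log |x|) ≤ 2 * |x| ^ (-(1:ℝ)/2) + |x| := abs_log_le x
    have h2 : |(Real.sqrt (2 * Real.pi))⁻¹ * Real.exp (-(1/2) * x ^ 2)|
        = (Real.sqrt (2 * Real.pi))⁻¹ * Real.exp (-(1/2) * x ^ 2) := by
      rw [abs_of_nonneg]; positivity
    rw [h2]
    have hc : (0:ℝ) ≤ (Real.sqrt (2 * Real.pi))⁻¹ := by positivity
    have he : (0:ℝ) ≤ Real.exp (-(1/2) * x ^ 2) := (Real.exp_pos _).le
    calc abs (Real.log |x|) * ((Real.sqrt (2 * Real.pi))⁻¹ * Real.exp (-(1/2) * x ^ 2))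
        ≤ (2 * |x| ^ (-(1:ℝ)/2) + |x|) * ((Real.sqrt (2 * Real.pi))⁻¹ * Real.exp (-(1/2) * x ^ 2)) := by
          exact mul_le_mul_of_nonneg_right h1 (by positivity)
      _ = (Real.sqrt (2 * Real.pi))⁻¹ * ((2 * |x| ^ (-(1:ℝ)/2) + |x|) * Real.exp (-(1/2) * x ^ 2)) := by ring

lemma integral_log_abs_gaussian_scale (v : ℝ) (hv : 0 < v) :
    ∫ x, Real.log |x| ∂(gaussianReal 0 v.toNNReal)
      = (1/2) * Real.log v + ∫ x, Real.log |x| ∂(gaussianReal 0 1) := by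
  set c := Real.sqrt v with hc
  have hc0 : 0 < c := Real.sqrt_pos.mpr hv
  have hmap : (gaussianReal 0 1).map (fun x => c * x) = gaussianReal 0 v.toNNReal := by
    have := gaussianReal_map_const_mul (μ := 0) (v := 1) c
    rw [this]
    congr 1
    · ring
    · ext
      simp [Real.sq_sqrt hv.le, Real.toNNReal, max_eq_left hv.le]
      rw [hc, Real.sq_sqrt hv.le]
  rw [← hmap, integral_map (measurable_const_mul c).aemeasurable
    (show Measurable fun x : ℝ => Real.log |x| from measurable_abs.log).aestronglyMeasurable]
  have hae : ∀ᵐ x ∂(gaussianReal 0 1), x ≠ 0 := by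
    have h0 : (gaussianReal 0 1) {(0:ℝ)} = 0 :=
      gaussianReal_absolutelyContinuous 0 one_ne_zero (measure_singleton 0)
    rw [ae_iff]
    simpa using h0
  have : ∫ x, Real.log |c * x| ∂(gaussianReal 0 1)
      = ∫ x, (Real.log c + Real.log |x|) ∂(gaussianReal 0 1) := by
    refine integral_congr_ae ?_
    filter_upwards [hae] with x hx
    rw [abs_mul, abs_of_pos hc0, Real.log_mul hc0.ne' (abs_ne_zero.mpr hx)]
  rw [this, integral_add (integrable_const _) integrable_log_abs_gaussian]
  simp only [integral_const, measure_univ, probReal_univ, one_smul, smul_eq_mul]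
  rw [hc, Real.log_sqrt hv.le]
  ring

/-- for the tail-index estimator with `m = 1`, `K₁ = d ≥ 2` and
`Σ = β 11ᵀ + (1-β) I`, `β ∈ [0,1]`, the expected estimator equals
`(1/2) log(βd² + (1-β)d) / log d`, and as `β` ranges over `[0,1]` this
expression ranges over the whole interval `[1/2, 1]`: the tail-index test can
output any `1/α ∈ [1/2, 1]` (i.e. `α ∈ [1,2]`) on jointly Gaussian data. -/
theorem tail_index_gaussian_value_and_range {Ω : Type*} [MeasurableSpace Ω]
    (μ : Measure Ω) [IsProbabilityMeasure μ]
    (d : ℕ) (hd : 2 ≤ d) (β : ℝ) (hβ : β ∈ Set.Icc (0 : ℝ) 1)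
    (X : Fin d → Ω → ℝ)
    (hmeas : ∀ p, Measurable (X p))
    (hGauss : ∀ a : Fin d → ℝ,
      Measure.map (fun ω => ∑ p, a p * X p ω) μ
        = gaussianReal 0 (Real.toNNReal (∑ p, ∑ q,
            a p * (β + if p = q then 1 - β else 0) * a q))) :
    (1 / Real.log d) *
        ((∫ ω, Real.log |∑ p, X p ω| ∂μ)
          - (1 / (d : ℝ)) * ∑ p, ∫ ω, Real.log |X p ω| ∂μ)
      = (1 / 2) * (Real.log (β * (d : ℝ) ^ 2 + (1 - β) * d) / Real.log d) ∧
    (fun b : ℝ => (1 / 2) * (Real.log (b * (d : ℝ) ^ 2 + (1 - b) * d) / Real.log d)) ''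
        Set.Icc (0 : ℝ) 1
      = Set.Icc (1 / 2 : ℝ) 1 := by
  obtain ⟨hβ0, hβ1⟩ := hβ
  have hd0 : (0:ℝ) < d := by positivity
  have hd2 : (2:ℝ) ≤ d := by exact_mod_cast hd
  have hdR : (1:ℝ) < d := by linarith
  have hlogd : 0 < Real.log d := Real.log_pos hdR
  set C := ∫ x, Real.log |x| ∂(gaussianReal 0 1) with hC
  have hmbl : Measurable fun x : ℝ => Real.log |x| := measurable_abs.log
  constructor
  · -- part 1
    -- each X p is standard gaussian
    have hXp : ∀ p, ∫ ω, Real.log |X p ω| ∂μ = C := by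
      intro p
      have h1 := hGauss (fun q => if q = p then 1 else 0)
      have h2 : (fun ω => ∑ q, (if q = p then (1:ℝ) else 0) * X q ω) = X p := by
        funext ω
        simp [ite_mul, Finset.sum_ite_eq']
      have h3 : (∑ p', ∑ q, (if p' = p then (1:ℝ) else 0)
          * (β + if p' = q then 1 - β else 0) * (if q = p then 1 else 0)) = 1 := by
        simp [ite_mul, mul_ite, Finset.sum_ite_eq', Finset.sum_ite_eq]
      rw [h2, h3] at h1
      simp only [Real.toNNReal_one] at h1
      rw [show (fun ω => Real.log |X p ω|) = fun ω => Real.log |X p ω| from rfl]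
      calc ∫ ω, Real.log |X p ω| ∂μ
          = ∫ x, Real.log |x| ∂(Measure.map (X p) μ) :=
            (integral_map (hmeas p).aemeasurable hmbl.aestronglyMeasurable).symm
        _ = C := by rw [h1]
    -- the sum is gaussian with variance s
    set s : ℝ := β * (d:ℝ) ^ 2 + (1 - β) * d with hs
    have hspos : 0 < s := by nlinarith [mul_nonneg hβ0 (show (0:ℝ) ≤ (d:ℝ)^2 - d by nlinarith)]
    have hYint : ∫ ω, Real.log |∑ p, X p ω| ∂μ = (1/2) * Real.log s + C := by
      have h1 := hGauss (fun _ => 1)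
      simp only [one_mul, mul_one] at h1
      have h3 : (∑ p : Fin d, ∑ q : Fin d, (β + if p = q then 1 - β else 0)) = s := by
        have hinner : ∀ p : Fin d, (∑ q : Fin d, (β + if p = q then 1 - β else 0))
            = (d:ℝ) * β + (1 - β) := by
          intro p
          rw [Finset.sum_add_distrib]
          simp [Finset.sum_ite_eq, mul_comm]
        simp only [hinner, Finset.sum_const, Finset.card_univ, Fintype.card_fin, nsmul_eq_mul]
        ring
      rw [h3] at h1
      have hmY : Measurable fun ω => ∑ p, X p ω :=
        Finset.measurable_sum Finset.univ fun p _ => hmeas p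
      calc ∫ ω, Real.log |∑ p, X p ω| ∂μ
          = ∫ x, Real.log |x| ∂(Measure.map (fun ω => ∑ p, X p ω) μ) :=
            (integral_map hmY.aemeasurable hmbl.aestronglyMeasurable).symm
        _ = ∫ x, Real.log |x| ∂(gaussianReal 0 s.toNNReal) := by rw [h1]
        _ = (1/2) * Real.log s + C := integral_log_abs_gaussian_scale s hspos
    rw [hYint]
    simp only [hXp, Finset.sum_const, Finset.card_univ, Fintype.card_fin, nsmul_eq_mul]
    have hdne : (d:ℝ) ≠ 0 := hd0.ne'
    field_simp
    ring
  · -- part 2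
    set f : ℝ → ℝ := fun b => (1 / 2) * (Real.log (b * (d : ℝ) ^ 2 + (1 - b) * d) / Real.log d)
      with hf
    have hA : ∀ b : ℝ, b ∈ Icc (0:ℝ) 1 → 0 < b * (d:ℝ)^2 + (1 - b) * d := by
      intro b ⟨h0, h1⟩; nlinarith [mul_nonneg h0 (show (0:ℝ) ≤ (d:ℝ)^2 - d by nlinarith)]
    have hcont : ContinuousOn f (Icc 0 1) := by
      refine ContinuousOn.mul continuousOn_const ?_
      refine ContinuousOn.div ?_ continuousOn_const fun b _ => hlogd.ne'
      exact ContinuousOn.log (by fun_prop) fun b hb => (hA b hb).ne'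
    have hmono : MonotoneOn f (Icc 0 1) := by
      intro b1 hb1 b2 hb2 hle
      have harg : b1 * (d:ℝ)^2 + (1 - b1) * d ≤ b2 * (d:ℝ)^2 + (1 - b2) * d := by nlinarith [mul_nonneg (sub_nonneg.mpr hle) (show (0:ℝ) ≤ (d:ℝ)^2 - d by nlinarith)]
      have hlog : Real.log (b1 * (d:ℝ)^2 + (1 - b1) * d)
          ≤ Real.log (b2 * (d:ℝ)^2 + (1 - b2) * d) := Real.log_le_log (hA b1 hb1) harg
      have : Real.log (b1 * (d:ℝ)^2 + (1 - b1) * d) / Real.log d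
          ≤ Real.log (b2 * (d:ℝ)^2 + (1 - b2) * d) / Real.log d :=
        (div_le_div_iff_of_pos_right hlogd).mpr hlog
      simp only [hf]
      linarith
    have hf0 : f 0 = 1/2 := by
      simp only [hf, zero_mul, sub_zero, one_mul, zero_add]
      rw [div_self hlogd.ne']
      norm_num
    have hf1 : f 1 = 1 := by
      simp only [hf, one_mul, sub_self, zero_mul, add_zero]
      rw [show ((d:ℝ))^2 = (d:ℝ)^(2:ℕ) from rfl, Real.log_pow]
      field_simp
      norm_num
    ext y
    constructor
    · rintro ⟨b, hb, rfl⟩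
      constructor
      · rw [← hf0]; exact hmono (left_mem_Icc.mpr zero_le_one) hb hb.1
      · rw [← hf1]; exact hmono hb (right_mem_Icc.mpr zero_le_one) hb.2
    · intro hy
      have := intermediate_value_Icc (zero_le_one) hcont
      rw [hf0, hf1] at this
      exact this hy
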